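/- The cone of T-positive semidefinite tensors is self-dual: for every symmetric tensor B : Fin l → Matrix (Fin m) (Fin m) ℝ, the matrix bcirc(B) is positive semidefinite if and only if for every symmetric tensor A : Fin l → Matrix (Fin m) (Fin m) ℝ with bcirc(A) positive semidefinite, the tensor inner product ⟨A, B⟩ is nonnegative. -/

import Mathlib

open Matrix

/-- The block circulant matrix of a third-order tensor given by its frontal slices. -/
def bcirc {m n l : ℕ} (A : Fin l → Matrix (Fin m) (Fin n) ℝ) :
    Matrix (Fin l × Fin m) (Fin l × Fin n) ℝ :=
  Matrix.of fun p q => A (p.1 - q.1) p.2 q.2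

/-- The entrywise inner product of two third-order tensors. -/
def tdot {m n l : ℕ} (A B : Fin l → Matrix (Fin m) (Fin n) ℝ) : ℝ :=
  ∑ k : Fin l, ∑ i : Fin m, ∑ j : Fin n, A k i j * B k i j

section aux
variable {m l : ℕ} [NeZero l]

lemma bcirc_isHermitian {A : Fin l → Matrix (Fin m) (Fin m) ℝ}
    (hA : ∀ k : Fin l, (A k)ᵀ = A (-k)) : (bcirc A).IsHermitian := by
  show (bcirc A)ᴴ = bcirc A
  ext ⟨p, i⟩ ⟨q, j⟩
  simp only [conjTranspose_apply, bcirc, of_apply, star_trivial]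
  have : (A (q - p))ᵀ i j = A (p - q) i j := by rw [hA, neg_sub]
  simpa using this

/-- rank-one shifted outer tensor of a vector -/
def outerT (x : Fin l × Fin m → ℝ) : Fin l → Matrix (Fin m) (Fin m) ℝ :=
  fun k => Matrix.of fun i j => ∑ p : Fin l, x (p, i) * x (p - k, j)

lemma outerT_symm (x : Fin l × Fin m → ℝ) (k : Fin l) :
    (outerT x k)ᵀ = outerT x (-k) := by
  ext i j
  simp only [transpose_apply, outerT, of_apply]
  refine (Fintype.sum_equiv (Equiv.addRight k) _ _ fun r => ?_).symm
  simp only [Equiv.coe_addRight]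
  rw [sub_neg_eq_add, add_sub_cancel_right, mul_comm]

lemma psd_vecMulVec {ι : Type*} [Fintype ι] [DecidableEq ι] (v : ι → ℝ) :
    (vecMulVec v v).PosSemidef := by
  rw [vecMulVec_eq Unit]
  have h := posSemidef_conjTranspose_mul_self (replicateRow Unit v)
  simpa [conjTranspose_replicateRow] using h

lemma bcirc_outerT (x : Fin l × Fin m → ℝ) :
    bcirc (outerT x) = ∑ s : Fin l,
      vecMulVec (fun u : Fin l × Fin m => x (u.1 + s, u.2))
        (fun u : Fin l × Fin m => x (u.1 + s, u.2)) := by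
  ext ⟨p, i⟩ ⟨q, j⟩
  simp only [bcirc, of_apply, outerT, Matrix.sum_apply, vecMulVec_apply]
  refine (Fintype.sum_equiv (Equiv.addLeft p) _ _ fun s => ?_).symm
  simp only [Equiv.coe_addLeft]
  have h : p + s - (p - q) = q + s := by abel
  rw [h]

lemma outerT_psd (x : Fin l × Fin m → ℝ) : (bcirc (outerT x)).PosSemidef := by
  rw [bcirc_outerT]
  refine Finset.sum_induction _ _ (fun a b ha hb => ha.add hb) .zero ?_
  exact fun s _ => psd_vecMulVec _

lemma quad_form_eq (B : Fin l → Matrix (Fin m) (Fin m) ℝ) (x : Fin l × Fin m → ℝ) :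
    star x ⬝ᵥ (bcirc B) *ᵥ x
      = ∑ p : Fin l, ∑ i : Fin m, ∑ k : Fin l, ∑ j : Fin m,
          x (p, i) * (B k i j * x (p - k, j)) := by
  calc star x ⬝ᵥ (bcirc B) *ᵥ x
      = ∑ u : Fin l × Fin m, ∑ v : Fin l × Fin m,
          x u * (B (u.1 - v.1) u.2 v.2 * x v) := by
        simp [dotProduct, mulVec, bcirc, Finset.mul_sum]
    _ = ∑ u : Fin l × Fin m, ∑ w : Fin l × Fin m,
          x u * (B w.1 u.2 w.2 * x (u.1 - w.1, w.2)) := by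
        refine Finset.sum_congr rfl fun u _ => ?_
        refine (Fintype.sum_equiv ((Equiv.subLeft u.1).prodCongr (Equiv.refl (Fin m))) _ _
          fun w => ?_).symm
        simp [Prod.map, sub_sub_cancel]
    _ = _ := by
        rw [Fintype.sum_prod_type]
        refine Finset.sum_congr rfl fun p _ => ?_
        refine Finset.sum_congr rfl fun i _ => ?_
        rw [Fintype.sum_prod_type]

lemma tdot_outerT (x : Fin l × Fin m → ℝ) (B : Fin l → Matrix (Fin m) (Fin m) ℝ) :
    tdot (outerT x) B = star x ⬝ᵥ (bcirc B) *ᵥ x := by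
  rw [quad_form_eq]
  calc tdot (outerT x) B
      = ∑ k : Fin l, ∑ i : Fin m, ∑ j : Fin m, ∑ p : Fin l,
          x (p, i) * x (p - k, j) * B k i j := by
        simp [tdot, outerT, Finset.sum_mul]
    _ = ∑ k : Fin l, ∑ i : Fin m, ∑ p : Fin l, ∑ j : Fin m,
          x (p, i) * x (p - k, j) * B k i j := by
        refine Finset.sum_congr rfl fun k _ => ?_
        refine Finset.sum_congr rfl fun i _ => ?_
        exact Finset.sum_comm
    _ = ∑ k : Fin l, ∑ p : Fin l, ∑ i : Fin m, ∑ j : Fin m,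
          x (p, i) * x (p - k, j) * B k i j := by
        refine Finset.sum_congr rfl fun k _ => ?_
        exact Finset.sum_comm
    _ = ∑ p : Fin l, ∑ k : Fin l, ∑ i : Fin m, ∑ j : Fin m,
          x (p, i) * x (p - k, j) * B k i j := Finset.sum_comm
    _ = ∑ p : Fin l, ∑ i : Fin m, ∑ k : Fin l, ∑ j : Fin m,
          x (p, i) * (B k i j * x (p - k, j)) := by
        refine Finset.sum_congr rfl fun p _ => ?_
        rw [Finset.sum_comm]
        refine Finset.sum_congr rfl fun i _ => ?_
        refine Finset.sum_congr rfl fun k _ => ?_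
        refine Finset.sum_congr rfl fun j _ => ?_
        ring

lemma trace_eq (A B : Fin l → Matrix (Fin m) (Fin m) ℝ)
    (hBsymm : ∀ k : Fin l, (B k)ᵀ = B (-k)) :
    trace (bcirc A * bcirc B) = (l : ℝ) * tdot A B := by
  have hB' : ∀ (k : Fin l) (i j : Fin m), B k j i = B (-k) i j := by
    intro k i j; rw [← hBsymm k]; rfl
  calc trace (bcirc A * bcirc B)
      = ∑ u : Fin l × Fin m, ∑ v : Fin l × Fin m,
          A (u.1 - v.1) u.2 v.2 * B (v.1 - u.1) v.2 u.2 := by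
        simp [trace, Matrix.mul_apply, bcirc, Matrix.diag]
    _ = ∑ u : Fin l × Fin m, ∑ v : Fin l × Fin m,
          A (u.1 - v.1) u.2 v.2 * B (u.1 - v.1) u.2 v.2 := by
        refine Finset.sum_congr rfl fun u _ => Finset.sum_congr rfl fun v _ => ?_
        rw [hB', neg_sub]
    _ = ∑ u : Fin l × Fin m, ∑ w : Fin l × Fin m,
          A w.1 u.2 w.2 * B w.1 u.2 w.2 := by
        refine Finset.sum_congr rfl fun u _ => ?_
        refine (Fintype.sum_equiv ((Equiv.subLeft u.1).prodCongr (Equiv.refl (Fin m))) _ _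
          fun w => ?_).symm
        simp [Prod.map, sub_sub_cancel]
    _ = ∑ p : Fin l, ∑ i : Fin m, ∑ k : Fin l, ∑ j : Fin m,
          A k i j * B k i j := by
        rw [Fintype.sum_prod_type]
        refine Finset.sum_congr rfl fun p _ => ?_
        refine Finset.sum_congr rfl fun i _ => ?_
        rw [Fintype.sum_prod_type]
    _ = ∑ _p : Fin l, tdot A B := by
        refine Finset.sum_congr rfl fun p _ => ?_
        rw [tdot, Finset.sum_comm]
    _ = (l : ℝ) * tdot A B := by
        simp [Finset.sum_const, mul_comm]

lemma trace_mul_psd_nonneg {ι : Type*} [Fintype ι] [DecidableEq ι]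
    {M N : Matrix ι ι ℝ} (hM : M.PosSemidef) (hN : N.PosSemidef) :
    0 ≤ trace (M * N) := by
  obtain ⟨C, hC⟩ : ∃ C : Matrix ι ι ℝ, M = Cᴴ * C := by
    open scoped MatrixOrder in exact CStarAlgebra.nonneg_iff_eq_star_mul_self.mp hM.nonneg
  rw [hC, Matrix.mul_assoc, trace_mul_comm]
  have key : ∀ r : ι, ((C * N) * Cᴴ) r r = star (C r) ⬝ᵥ N *ᵥ (C r) := by
    intro r
    simp only [Matrix.mul_apply, conjTranspose_apply, dotProduct, mulVec, star_trivial,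
      Pi.star_apply, Finset.sum_mul, Finset.mul_sum]
    rw [Finset.sum_comm]
    exact Finset.sum_congr rfl fun u _ => Finset.sum_congr rfl fun v _ => by ring
  calc (0:ℝ) ≤ ∑ r : ι, star (C r) ⬝ᵥ N *ᵥ (C r) :=
        Finset.sum_nonneg fun r _ => hN.dotProduct_mulVec_nonneg (C r)
    _ = trace ((C * N) * Cᴴ) := by
        rw [trace]
        exact (Finset.sum_congr rfl fun r _ => (key r)).symm

end aux

/-- self-duality of the T-PSD cone: a symmetric tensor `B` is T-PSD iff
`⟨A, B⟩ ≥ 0` for every T-PSD symmetric tensor `A`. -/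
theorem tpsd_cone_self_dual
    (m l : ℕ) (B : Fin l → Matrix (Fin m) (Fin m) ℝ)
    (hBsymm : ∀ k : Fin l, (B k)ᵀ = B (-k)) :
    (bcirc B).PosSemidef ↔
      ∀ A : Fin l → Matrix (Fin m) (Fin m) ℝ,
        (∀ k : Fin l, (A k)ᵀ = A (-k)) → (bcirc A).PosSemidef → 0 ≤ tdot A B := by
  rcases Nat.eq_zero_or_pos l with rfl | hl
  · constructor
    · intro _ A _ _
      simp [tdot]
    · intro _
      refine PosSemidef.of_dotProduct_mulVec_nonneg ?_ fun x => ?_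
      · show (bcirc B)ᴴ = bcirc B
        ext ⟨p, _⟩
        exact p.elim0
      · simp [dotProduct]
  · have : NeZero l := ⟨hl.ne'⟩
    constructor
    · intro hB A hAsymm hApsd
      have h := trace_mul_psd_nonneg hApsd hB
      rw [trace_eq A B hBsymm] at h
      have hl' : (0:ℝ) < l := by exact_mod_cast hl
      nlinarith
    · intro H
      refine PosSemidef.of_dotProduct_mulVec_nonneg (bcirc_isHermitian hBsymm) fun x => ?_
      have h := H (outerT x) (outerT_symm x) (outerT_psd x)
      rwa [tdot_outerT] at h
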